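/- Let g and η be integers with g ≥ 10, −2 ≤ η ≤ 2, and η ≡ g + 1 (mod 4). Then r = (g + 1 + η)/2 and d = (5g + 1 + 3η)/4 are integers satisfying r ≥ 2 and d ≥ 2r − 1, the Castelnuovo semigroup S_{r,d} has genus g, and its effective weight satisfies ewt(S_{r,d}) = ((g+1)² − η²)/8 = ⌊(g+1)²/8⌋. -/

import Mathlib

/-- The Castelnuovo semigroup `S_{r,d}`: the additive submonoid of ℕ generated by
the interval of integers `{d-r+1, …, d}`. -/
def castelnuovoSemigroup (r d : ℕ) : AddSubmonoid ℕ :=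
  AddSubmonoid.closure (Set.Icc (d - r + 1) d)

/-- A minimal generator of a numerical semigroup `S ⊆ ℕ`: a nonzero element of `S`
that cannot be written as a sum of two nonzero elements of `S`. -/
def IsMinimalGenerator (S : AddSubmonoid ℕ) (a : ℕ) : Prop :=
  a ∈ S ∧ a ≠ 0 ∧ ¬ ∃ x ∈ S, ∃ y ∈ S, x ≠ 0 ∧ y ≠ 0 ∧ a = x + y

/-- The effective weight of a numerical semigroup: the number of pairs `(b, a)` where
`b` is a gap of `S` and `a` is a minimal generator of `S` with `a < b`. -/
noncomputable def effectiveWeight (S : AddSubmonoid ℕ) : ℕ :=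
  {p : ℕ × ℕ | p.1 ∉ S ∧ IsMinimalGenerator S p.2 ∧ p.2 < p.1}.ncard

section Aux

variable {m d : ℕ}

/-- Splitting lemma: any `n ≥ 2m` is a sum of two nonzero elements of the closure. -/
lemma cs_split (hm : 1 ≤ m) (hmd : m ≤ d) (h3 : 3 * m ≤ 2 * d + 1)
    (n : ℕ) (hn : 2 * m ≤ n) :
    ∃ x ∈ AddSubmonoid.closure (Set.Icc m d), ∃ y ∈ AddSubmonoid.closure (Set.Icc m d),
      x ≠ 0 ∧ y ≠ 0 ∧ n = x + y := by
  induction n using Nat.strong_induction_on with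
  | _ n ih =>
    by_cases hle : n ≤ 2 * d
    · refine ⟨max m (n - d), ?_, n - max m (n - d), ?_, ?_, ?_, ?_⟩
      · exact AddSubmonoid.subset_closure ⟨le_max_left _ _, by omega⟩
      · exact AddSubmonoid.subset_closure ⟨by omega, by omega⟩
      · omega
      · omega
      · omega
    · obtain ⟨x, hx, y, hy, hx0, hy0, hxy⟩ := ih (n - m) (by omega) (by omega)
      exact ⟨m, AddSubmonoid.subset_closure ⟨le_rfl, hmd⟩, x + y,
        add_mem hx hy, by omega, by omega, by omega⟩

lemma cs_mem_iff (hm : 1 ≤ m) (hmd : m ≤ d) (h3 : 3 * m ≤ 2 * d + 1) (n : ℕ) :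
    n ∈ AddSubmonoid.closure (Set.Icc m d) ↔ n = 0 ∨ (m ≤ n ∧ n ≤ d) ∨ 2 * m ≤ n := by
  constructor
  · intro h
    induction h using AddSubmonoid.closure_induction with
    | mem x hx => exact Or.inr (Or.inl hx)
    | zero => exact Or.inl rfl
    | add x y _ _ hx hy => omega
  · rintro (rfl | ⟨h1, h2⟩ | h)
    · exact zero_mem _
    · exact AddSubmonoid.subset_closure ⟨h1, h2⟩
    · obtain ⟨x, hx, y, hy, _, _, rfl⟩ := cs_split hm hmd h3 n h
      exact add_mem hx hy

lemma cs_minGen_iff (hm : 1 ≤ m) (hmd : m ≤ d) (h3 : 3 * m ≤ 2 * d + 1) (hd2 : d < 2 * m)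
    (a : ℕ) :
    IsMinimalGenerator (AddSubmonoid.closure (Set.Icc m d)) a ↔ m ≤ a ∧ a ≤ d := by
  constructor
  · rintro ⟨haS, ha0, hns⟩
    rw [cs_mem_iff hm hmd h3] at haS
    rcases haS with rfl | h | h
    · omega
    · exact h
    · exact absurd (cs_split hm hmd h3 a h) hns
  · rintro ⟨h1, h2⟩
    refine ⟨AddSubmonoid.subset_closure ⟨h1, h2⟩, by omega, ?_⟩
    rintro ⟨x, hx, y, hy, hx0, hy0, rfl⟩
    rw [cs_mem_iff hm hmd h3] at hx hy
    omega

lemma cs_genus (hm : 1 ≤ m) (hmd : m ≤ d) (h3 : 3 * m ≤ 2 * d + 1) :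
    ((AddSubmonoid.closure (Set.Icc m d) : Set ℕ)ᶜ).ncard = (m - 1) + (2 * m - d - 1) := by
  have hset : ((AddSubmonoid.closure (Set.Icc m d) : Set ℕ)ᶜ)
      = ↑(Finset.Ico 1 m ∪ Finset.Ioo d (2 * m)) := by
    ext n
    simp only [Set.mem_compl_iff, SetLike.mem_coe, cs_mem_iff hm hmd h3 n, Finset.coe_union,
      Set.mem_union, Finset.coe_Ico, Finset.coe_Ioo, Set.mem_Ico, Set.mem_Ioo]
    omega
  rw [hset, Set.ncard_coe_finset, Finset.card_union_of_disjoint, Nat.card_Ico, Nat.card_Ioo]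
  rw [Finset.disjoint_left]
  intro n hn hn'
  simp only [Finset.mem_Ico, Finset.mem_Ioo] at hn hn'
  omega

lemma cs_ewt (hm : 1 ≤ m) (hmd : m ≤ d) (h3 : 3 * m ≤ 2 * d + 1) (hd2 : d < 2 * m) :
    effectiveWeight (AddSubmonoid.closure (Set.Icc m d))
      = (2 * m - d - 1) * (d - m + 1) := by
  have hset : {p : ℕ × ℕ | p.1 ∉ AddSubmonoid.closure (Set.Icc m d) ∧
      IsMinimalGenerator (AddSubmonoid.closure (Set.Icc m d)) p.2 ∧ p.2 < p.1}
      = ↑(Finset.Ioo d (2 * m) ×ˢ Finset.Icc m d) := by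
    ext ⟨b, a⟩
    simp only [Set.mem_setOf_eq, SetLike.mem_coe, cs_mem_iff hm hmd h3,
      cs_minGen_iff hm hmd h3 hd2, Finset.coe_product, Set.mem_prod, Finset.coe_Ioo,
      Finset.coe_Icc, Set.mem_Ioo, Set.mem_Icc]
    omega
  rw [effectiveWeight, hset, Set.ncard_coe_finset, Finset.card_product, Nat.card_Ioo,
    Nat.card_Icc]
  congr 1
  omega

end Aux

theorem castelnuovo_of_max_ewt (g η : ℤ) (hg : 10 ≤ g) (hη1 : -2 ≤ η) (hη2 : η ≤ 2)
    (hmod : (4 : ℤ) ∣ (g + 1 - η)) :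
    ∃ r d : ℕ, (2 * (r : ℤ) = g + 1 + η) ∧ (4 * (d : ℤ) = 5 * g + 1 + 3 * η) ∧
      2 ≤ r ∧ 2 * r - 1 ≤ d ∧
      (((castelnuovoSemigroup r d : Set ℕ)ᶜ).ncard : ℤ) = g ∧
      (effectiveWeight (castelnuovoSemigroup r d) : ℤ) = ((g + 1) ^ 2 - η ^ 2) / 8 ∧
      (effectiveWeight (castelnuovoSemigroup r d) : ℤ) = (g + 1) ^ 2 / 8 := by
  obtain ⟨c, hc⟩ := hmod
  have hc3 : 3 ≤ c := by omega
  refine ⟨(2 * c + η).toNat, (5 * c + 2 * η - 1).toNat, ?_⟩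
  set r : ℕ := (2 * c + η).toNat with hrdef
  set d : ℕ := (5 * c + 2 * η - 1).toNat with hddef
  have hr : (r : ℤ) = 2 * c + η := Int.toNat_of_nonneg (by omega)
  have hd : (d : ℤ) = 5 * c + 2 * η - 1 := Int.toNat_of_nonneg (by omega)
  set m : ℕ := d - r + 1 with hmdef
  have hm : (m : ℤ) = 3 * c + η := by omega
  have hm1 : 1 ≤ m := by omega
  have hmd : m ≤ d := by omega
  have h3 : 3 * m ≤ 2 * d + 1 := by omega
  have hd2 : d < 2 * m := by omega
  have hS : castelnuovoSemigroup r d = AddSubmonoid.closure (Set.Icc m d) := rfl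
  have hgenus : (((castelnuovoSemigroup r d : Set ℕ)ᶜ).ncard : ℤ) = g := by
    rw [hS, cs_genus hm1 hmd h3]
    omega
  have e1 : ((2 * m - d - 1 : ℕ) : ℤ) = c := by omega
  have e2 : ((d - m + 1 : ℕ) : ℤ) = 2 * c + η := by omega
  have hE : ((effectiveWeight (castelnuovoSemigroup r d)) : ℤ) = c * (2 * c + η) := by
    rw [hS, cs_ewt hm1 hmd h3 hd2, Nat.cast_mul, e1, e2]
  have h8 : (g + 1) ^ 2 - η ^ 2 = 8 * (c * (2 * c + η)) := by
    linear_combination (g + 1 + η + 4 * c) * hc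
  have hewt1 : ((effectiveWeight (castelnuovoSemigroup r d)) : ℤ)
      = ((g + 1) ^ 2 - η ^ 2) / 8 := by
    rw [h8, Int.mul_ediv_cancel_left _ (by norm_num), hE]
  refine ⟨by omega, by omega, by omega, by omega, hgenus, hewt1, ?_⟩
  have hsq : η ^ 2 = 0 ∨ η ^ 2 = 1 ∨ η ^ 2 = 4 := by
    interval_cases η <;> norm_num
  have hexp : ((g + 1) ^ 2 : ℤ) = 8 * (c * (2 * c + η)) + η ^ 2 := by linarith
  rw [hexp, hE]
  rcases hsq with h | h | h <;> rw [h] <;> omega
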